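/- arXiv:1707.06144 — 4 statements merged into one kernel-verified Lean document; each statement's English description precedes it below -/
import Mathlib

section
/- Let f : closed unit disc → ℝ² be continuous, let γ = f restricted to S¹, and let p be a point not on γ with winding number of γ around p equal to zero. Then there exists g : closed unit disc → ℝ² homotopic to f, agreeing with f on S¹, such that p is not in the image of the open disc under g. -/
noncomputable section

/-- `WindingNumber γ p n` : the closed curve `γ` (period-one parametrized) has winding
number `n` around `p`; equivalently `n` is the degree of the normalized circle map
`t ↦ (γ t - p)/‖γ t - p‖`, expressed through a lift under `z ↦ p + exp z`. -/
def WindingNumber (γ : ℝ → ℂ) (p : ℂ) (n : ℤ) : Prop :=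
  ∃ g : ℝ → ℂ, Continuous g ∧ (∀ t, p + Complex.exp (g t) = γ t) ∧
    ∀ t, g (t + 1) = g t + (n : ℂ) * (2 * Real.pi * Complex.I)

/-- The standard parametrization point `e^{2πit}` of the unit circle `S¹ ⊆ ℂ`. -/
def circlePt (t : ℝ) : Metric.sphere (0 : ℂ) 1 :=
  ⟨Complex.exp ((2 * Real.pi * t : ℝ) * Complex.I), by
    first
      | rw [Metric.mem_sphere, dist_zero_right, Complex.norm_exp_ofReal_mul_I]
      | simp [Complex.norm_exp]⟩

/-- The inclusion of the unit circle into the closed unit disc. -/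
def sphereIncl (z : Metric.sphere (0:ℂ) 1) : Metric.closedBall (0:ℂ) 1 :=
  ⟨z.val, Metric.sphere_subset_closedBall z.property⟩

/-- If `f` is continuous on the closed unit disc, `γ = f|_{S¹}`, and `p`
is not on `γ` with winding number of `γ` around `p` zero, then there is `g` homotopic to
`f`, agreeing with `f` on `S¹`, with `p` not in the image of the open disc under `g`. -/
theorem statement1 (f : C(Metric.closedBall (0:ℂ) 1, ℂ)) (p : ℂ)
    (hp : ∀ z : Metric.sphere (0:ℂ) 1, f (sphereIncl z) ≠ p)
    (h : WindingNumber (fun t => f (sphereIncl (circlePt t))) p 0) :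
    ∃ g : C(Metric.closedBall (0:ℂ) 1, ℂ),
      ContinuousMap.Homotopic f g ∧
      (∀ z : Metric.sphere (0:ℂ) 1, g (sphereIncl z) = f (sphereIncl z)) ∧
      ∀ z : Metric.closedBall (0:ℂ) 1, ‖z.val‖ < 1 → g z ≠ p := by

  classical
  obtain ⟨w, hwc, hweq, hwper⟩ := h
  have hper : Function.Periodic w 1 := by
    intro t; have := hwper t; simpa using this
  -- descend to the additive circle
  set W : AddCircle (1:ℝ) → ℂ := hper.lift with hW
  have hWc : Continuous W := continuous_coinduced_dom.mpr hwc
  -- identify `Metric.sphere 0 1` with `Circle`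
  let e : Metric.sphere (0:ℂ) 1 → Circle := fun z => ⟨z.val, z.property⟩
  have hec : Continuous e := Continuous.subtype_mk continuous_subtype_val _
  let ψ := (AddCircle.homeomorphCircle (one_ne_zero : (1:ℝ) ≠ 0)).symm
  let φ : Metric.sphere (0:ℂ) 1 → ℂ := fun z => W (ψ (e z))
  have hφc : Continuous φ := hWc.comp (ψ.continuous.comp hec)
  -- key computation : for a point of the circle written as `circlePt t`
  have hcirc : ∀ t : ℝ, e (circlePt t) =
      AddCircle.homeomorphCircle (one_ne_zero : (1:ℝ) ≠ 0) ((t : AddCircle (1:ℝ))) := by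
    intro t
    apply Subtype.ext
    rw [AddCircle.homeomorphCircle_apply, AddCircle.toCircle_apply_mk]
    show Complex.exp (((2 * Real.pi * t : ℝ) : ℂ) * Complex.I) = _
    rw [Circle.coe_exp]
    norm_num
  have key : ∀ z : Metric.sphere (0:ℂ) 1, p + Complex.exp (φ z) = f (sphereIncl z) := by
    intro z
    obtain ⟨x, hx⟩ : ∃ x : AddCircle (1:ℝ),
        AddCircle.homeomorphCircle (one_ne_zero : (1:ℝ) ≠ 0) x = e z :=
      ⟨ψ (e z), (AddCircle.homeomorphCircle _).apply_symm_apply _⟩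
    induction' x using QuotientAddGroup.induction_on with t
    have hz : circlePt t = z := by
      apply Subtype.ext
      have := congrArg Subtype.val ((hcirc t).trans hx)
      exact this
    have hφz : φ z = w t := by
      show W (ψ (e z)) = w t
      rw [← hx, Homeomorph.symm_apply_apply]
      exact hper.lift_coe t
    rw [hφz, hweq t]
    show f (sphereIncl (circlePt t)) = _
    rw [hz]
  -- Tietze extension of `φ` to the closed disc
  set s : Set (Metric.closedBall (0:ℂ) 1) :=
    Subtype.val ⁻¹' (Metric.sphere (0:ℂ) 1) with hs
  have hsc : IsClosed s := Metric.isClosed_sphere.preimage continuous_subtype_val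
  let φ' : C(s, ℂ) :=
    ⟨fun z => φ ⟨z.val.val, z.property⟩, by
      exact hφc.comp (Continuous.subtype_mk (continuous_subtype_val.comp continuous_subtype_val) _)⟩
  obtain ⟨Φ, hΦ⟩ := φ'.exists_restrict_eq hsc
  have hΦ' : ∀ z : s, Φ z.val = φ ⟨z.val.val, z.property⟩ := fun z =>
    congrFun (congrArg DFunLike.coe hΦ) z
  -- the candidate map
  refine ⟨⟨fun z => p + Complex.exp (Φ z), by
      exact continuous_const.add (Complex.continuous_exp.comp Φ.continuous)⟩, ?_, ?_, ?_⟩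
  · -- straight-line homotopy, since ℂ is convex
    exact ⟨{ toFun := fun q => (1 - (q.1 : ℝ)) • f q.2 + (q.1 : ℝ) • (p + Complex.exp (Φ q.2))
             continuous_toFun := by
               apply Continuous.add
               · fun_prop
               · fun_prop
             map_zero_left := by intro x; simp
             map_one_left := by intro x; simp }⟩
  · intro z
    have hmem : sphereIncl z ∈ s := z.property
    have := hΦ' ⟨sphereIncl z, hmem⟩
    simp only [ContinuousMap.coe_mk]
    rw [this]
    have hzz : (⟨(sphereIncl z).val, hmem⟩ : Metric.sphere (0:ℂ) 1) = z :=
      Subtype.ext rfl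
    rw [hzz, key z]
  · intro z _ hgz
    simp only [ContinuousMap.coe_mk] at hgz
    have : Complex.exp (Φ z) = 0 := by linear_combination hgz
    exact Complex.exp_ne_zero _ this
end
end

section
/- Let R = [-1,1]² ⊂ ℝ² and let f be a continuous map defined on ∂R such that f maps {y=1} into {y>1}, {y=-1} into {y<-1}, {x=1} into {x<1}, and {x=-1} into {x>-1}. Then the Lefschetz index of f along ∂R (positively oriented) equals -1. -/
noncomputable section

/-- A loop in the plane `ℂ`, parametrized with period `1`. -/
def IsLoop (γ : ℝ → ℂ) : Prop := Continuous γ ∧ Function.Periodic γ 1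

/-- Degree of a period-one parametrized circle-valued map. -/
def CircleMapDegree (u : ℝ → ℂ) (d : ℤ) : Prop :=
  ∃ θ : ℝ → ℝ, Continuous θ ∧ (∀ t, u t = Complex.exp ((θ t : ℂ) * Complex.I)) ∧
    ∀ t, θ (t + 1) = θ t + (d : ℝ) * (2 * Real.pi)

/-- The Lefschetz index of `f` along the closed curve `γ`: the degree of
`t ↦ (f (γ t) - γ t) / ‖f (γ t) - γ t‖`. -/
def LefschetzIndex (f : ℂ → ℂ) (γ : ℝ → ℂ) (d : ℤ) : Prop :=
  CircleMapDegree (fun t => (f (γ t) - γ t) / ((‖f (γ t) - γ t‖ : ℝ) : ℂ)) d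

/-- The boundary of the square `R = [-1,1]²`, viewed in `ℂ ≅ ℝ²`. -/
def SqBdry : Set ℂ := {z : ℂ | max |z.re| |z.im| = 1}

lemma sq_key (f : ℂ → ℂ) (z : ℂ) (hz : max |z.re| |z.im| = 1)
    (htop : z.im = 1 → 1 < (f z).im) (hbot : z.im = -1 → (f z).im < -1)
    (hright : z.re = 1 → (f z).re < 1) (hleft : z.re = -1 → -1 < (f z).re) :
    f z - z ≠ 0 ∧
      ¬((f z - z).re * ‖z‖ = ‖f z - z‖ * z.re ∧
        (f z - z).im * ‖z‖ = -(‖f z - z‖ * z.im)) := by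
  have hz0 : z ≠ 0 := by
    intro h
    rw [h] at hz
    simp at hz
  have hzpos : 0 < ‖z‖ := by simpa [norm_pos_iff] using hz0
  rcases max_cases |z.re| |z.im| with ⟨h1, _⟩ | ⟨h1, _⟩ <;> rw [h1] at hz
  · rcases abs_eq (by norm_num : (0:ℝ) ≤ 1) |>.1 hz with h | h
    · have hv : (f z - z).re < 0 := by
        have := hright h; simp [Complex.sub_re, h]; linarith
      have hvne : f z - z ≠ 0 := fun hc => by simp [hc] at hv
      refine ⟨hvne, fun ⟨e1, _⟩ => ?_⟩
      have hV : 0 < ‖f z - z‖ := by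
        simpa [norm_pos_iff] using hvne
      nlinarith [hv, hzpos, hV, e1, h]
    · have hv : 0 < (f z - z).re := by
        have := hleft h; simp [Complex.sub_re, h]; linarith
      have hvne : f z - z ≠ 0 := fun hc => by simp [hc] at hv
      refine ⟨hvne, fun ⟨e1, _⟩ => ?_⟩
      have hV : 0 < ‖f z - z‖ := by
        simpa [norm_pos_iff] using hvne
      nlinarith [hv, hzpos, hV, e1, h]
  · rcases abs_eq (by norm_num : (0:ℝ) ≤ 1) |>.1 hz with h | h
    · have hv : 0 < (f z - z).im := by
        have := htop h; simp [Complex.sub_im, h]; linarith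
      have hvne : f z - z ≠ 0 := fun hc => by simp [hc] at hv
      refine ⟨hvne, fun ⟨_, e2⟩ => ?_⟩
      have hV : 0 < ‖f z - z‖ := by
        simpa [norm_pos_iff] using hvne
      nlinarith [hv, hzpos, hV, e2, h]
    · have hv : (f z - z).im < 0 := by
        have := hbot h; simp [Complex.sub_im, h]; linarith
      have hvne : f z - z ≠ 0 := fun hc => by simp [hc] at hv
      refine ⟨hvne, fun ⟨_, e2⟩ => ?_⟩
      have hV : 0 < ‖f z - z‖ := by
        simpa [norm_pos_iff] using hvne
      nlinarith [hv, hzpos, hV, e2, h]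


theorem statement3 (f : ℂ → ℂ) (hf : ContinuousOn f SqBdry)
    (γ : ℝ → ℂ) (hloop : IsLoop γ) (hrange : Set.range γ = SqBdry)
    (hinj : Set.InjOn γ (Set.Ico (0:ℝ) 1))
    (hpos : WindingNumber γ 0 1)
    (htop : ∀ z ∈ SqBdry, z.im = 1 → 1 < (f z).im)
    (hbot : ∀ z ∈ SqBdry, z.im = -1 → (f z).im < -1)
    (hright : ∀ z ∈ SqBdry, z.re = 1 → (f z).re < 1)
    (hleft : ∀ z ∈ SqBdry, z.re = -1 → -1 < (f z).re) :
    LefschetzIndex f γ (-1) := by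
  obtain ⟨hγc, hγp⟩ := hloop
  obtain ⟨g, hgc, hge, hgp⟩ := hpos
  have hge' : ∀ t, Complex.exp (g t) = γ t := fun t => by
    have := hge t; rwa [zero_add] at this
  have hmem : ∀ t, γ t ∈ SqBdry := fun t => hrange ▸ Set.mem_range_self t
  set v : ℝ → ℂ := fun t => f (γ t) - γ t with hv
  have hkey := fun t => sq_key f (γ t) (hmem t) (htop _ (hmem t)) (hbot _ (hmem t))
    (hright _ (hmem t)) (hleft _ (hmem t))
  have hvne : ∀ t, v t ≠ 0 := fun t => (hkey t).1
  have hvapos : ∀ t, 0 < ‖v t‖ := fun t => by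
    simpa [norm_pos_iff] using hvne t
  have hva : ∀ t, ((‖v t‖ : ℝ) : ℂ) ≠ 0 := fun t => by
    simpa using (hvapos t).ne'
  set u : ℝ → ℂ := fun t => v t / ((‖v t‖ : ℝ) : ℂ) with hu
  have huabs : ∀ t, ‖u t‖ = 1 := fun t => by
    simp [hu, norm_div, Complex.norm_real, Real.norm_eq_abs, abs_of_pos (hvapos t),
      div_self (hvapos t).ne']
  set e : ℝ → ℂ := fun t => Complex.exp ((((g t).im - Real.pi : ℝ) : ℂ) * Complex.I) with he
  have heabs : ∀ t, ‖e t‖ = 1 := fun t => by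
    simp [he, Complex.norm_exp]
  set q : ℝ → ℂ := fun t => u t * e t with hq
  have hqabs : ∀ t, ‖q t‖ = 1 := fun t => by
    simp [hq, map_mul, huabs t, heabs t]
  have hqne : ∀ t, q t ≠ 0 := fun t h => by
    have := hqabs t; rw [h] at this; simp at this
  -- the crucial slit-plane fact
  have hqslit : ∀ t, q t ∈ Complex.slitPlane := by
    intro t
    by_contra hcon
    have hri : (q t).re ≤ 0 ∧ (q t).im = 0 := by
      simpa [Complex.mem_slitPlane_iff, not_or, not_lt] using hcon
    have hqre : (q t).re = -1 := by
      have h1 := hqabs t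
      have h2 : ‖q t‖ = |(q t).re| := by
        rw [Complex.norm_def, Complex.normSq_apply, hri.2]
        simp [Real.sqrt_mul_self_eq_abs]
      rw [h2] at h1
      rcases abs_eq (by norm_num : (0:ℝ) ≤ 1) |>.1 h1 with h | h
      · linarith [hri.1]
      · exact h
    have hqeq : q t = -1 := by
      apply Complex.ext <;> simp [hqre, hri.2]
    have heinv : e t ≠ 0 := Complex.exp_ne_zero _
    -- deduce u t = exp(-(g t).im * I)
    have h3 : u t * e t = -1 := hqeq
    have h4 : Complex.exp (-(((g t).im : ℝ) : ℂ) * Complex.I) * e t = -1 := by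
      rw [he]
      simp only
      rw [← Complex.exp_add,
        show -(((g t).im : ℝ) : ℂ) * Complex.I + (((g t).im - Real.pi : ℝ) : ℂ) * Complex.I
          = -((Real.pi : ℂ) * Complex.I) from by push_cast; ring,
        Complex.exp_neg, Complex.exp_pi_mul_I]
      norm_num
    have hueq2 : u t = Complex.exp (-(((g t).im : ℝ) : ℂ) * Complex.I) :=
      mul_right_cancel₀ heinv (h3.trans h4.symm)
    -- conj (γ t) = |γ t| * exp(-(g t).im * I)
    have hconj : (starRingEnd ℂ) (γ t) =
        ((‖γ t‖ : ℝ) : ℂ) * Complex.exp (-(((g t).im : ℝ) : ℂ) * Complex.I) := by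
      rw [← hge', ← Complex.exp_conj, Complex.norm_exp, Complex.ofReal_exp, ← Complex.exp_add]
      congr 1
      apply Complex.ext <;> simp
    have hveq : v t = ((‖v t‖ : ℝ) : ℂ) *
        Complex.exp (-(((g t).im : ℝ) : ℂ) * Complex.I) := by
      have h5 : v t / ((‖v t‖ : ℝ) : ℂ)
          = Complex.exp (-(((g t).im : ℝ) : ℂ) * Complex.I) := hueq2
      rw [div_eq_iff (hva t)] at h5
      exact h5.trans (mul_comm _ _)
    have hmain : v t * ((‖γ t‖ : ℝ) : ℂ)
        = ((‖v t‖ : ℝ) : ℂ) * (starRingEnd ℂ) (γ t) := by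
      rw [hconj]
      nth_rewrite 1 [hveq]
      ring
    apply (hkey t).2
    constructor
    · have := congrArg Complex.re hmain
      simpa [hv, Complex.mul_re, Complex.mul_im] using this
    · have := congrArg Complex.im hmain
      simpa [hv, Complex.mul_re, Complex.mul_im] using this
  -- continuity facts
  have hvc : Continuous v := ((hf.comp_continuous hγc hmem).sub hγc)
  have hvac : Continuous fun t => ((‖v t‖ : ℝ) : ℂ) :=
    Complex.continuous_ofReal.comp (continuous_norm.comp hvc)
  have huc : Continuous u := hvc.div hvac hva
  have hgimc : Continuous fun t => (g t).im := Complex.continuous_im.comp hgc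
  have hec : Continuous e := Complex.continuous_exp.comp
    ((Complex.continuous_ofReal.comp (hgimc.sub continuous_const)).mul continuous_const)
  have hqc : Continuous q := huc.mul hec
  have hlogc : Continuous fun t => Complex.log (q t) := hqc.clog hqslit
  -- define the lift
  refine ⟨fun t => Real.pi - (g t).im + (Complex.log (q t)).im, ?_, ?_, ?_⟩
  · exact (continuous_const.sub hgimc).add (Complex.continuous_im.comp hlogc)
  · intro t
    have hlre : (Complex.log (q t)).re = 0 := by
      rw [Complex.log_re, hqabs t, Real.log_one]
    have hexplog : Complex.exp ((((Complex.log (q t)).im : ℝ) : ℂ) * Complex.I) = q t := by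
      have h3 : (((Complex.log (q t)).im : ℝ) : ℂ) * Complex.I = Complex.log (q t) := by
        apply Complex.ext <;> simp [hlre]
      rw [h3, Complex.exp_log (hqne t)]
    have key : Complex.exp ((((Real.pi - (g t).im + (Complex.log (q t)).im : ℝ)) : ℂ)
        * Complex.I) = u t := by
      rw [show ((((Real.pi - (g t).im + (Complex.log (q t)).im : ℝ)) : ℂ)) * Complex.I
          = (((Real.pi - (g t).im : ℝ)) : ℂ) * Complex.I
            + (((Complex.log (q t)).im : ℝ) : ℂ) * Complex.I from by push_cast; ring]
      rw [Complex.exp_add, hexplog]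
      have hqt : q t = u t * Complex.exp ((((g t).im - Real.pi : ℝ) : ℂ) * Complex.I) := rfl
      rw [hqt, ← mul_assoc, mul_comm (Complex.exp _) (u t), mul_assoc, ← Complex.exp_add]
      rw [show (((Real.pi - (g t).im : ℝ)) : ℂ) * Complex.I
          + (((g t).im - Real.pi : ℝ) : ℂ) * Complex.I = 0 from by push_cast; ring]
      simp
    exact key.symm
  · intro t
    have hγ1 : γ (t + 1) = γ t := hγp t
    have hgim : (g (t + 1)).im = (g t).im + 2 * Real.pi := by
      rw [hgp t]; simp
    have hu1 : u (t + 1) = u t := by simp only [hu, hv, hγ1]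
    have he1 : e (t + 1) = e t := by
      simp only [he, hgim]
      rw [show ((((g t).im + 2 * Real.pi - Real.pi : ℝ)) : ℂ) * Complex.I
          = (((g t).im - Real.pi : ℝ) : ℂ) * Complex.I + 2 * (Real.pi : ℂ) * Complex.I from by
        push_cast; ring]
      rw [Complex.exp_add, Complex.exp_two_pi_mul_I, mul_one]
    have hq1 : q (t + 1) = q t := by rw [hq]; simp only [hu1, he1]
    show Real.pi - (g (t + 1)).im + (Complex.log (q (t + 1))).im
        = Real.pi - (g t).im + (Complex.log (q t)).im + ((-1 : ℤ) : ℝ) * (2 * Real.pi)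
    rw [hq1, hgim]
    push_cast
    ring
end
end

section
/- Let R = [-1,1]² ⊂ ℝ² and let f be a continuous map defined on ∂R mapping {y=1} into {y<1}, {y=-1} into {y>-1}, {x=1} into {x<1}, and {x=-1} into {x>-1}. Then the Lefschetz index of f along ∂R (positively oriented) equals 1. -/
noncomputable section

lemma degree_transfer {u v : ℝ → ℂ} {d : ℤ} (hu : CircleMapDegree u d)
    (hv : Continuous v) (hv1 : ∀ t, ‖v t‖ = 1)
    (hne : ∀ t, v t ≠ - u t) (huvper : ∀ t, v (t+1) / u (t+1) = v t / u t) :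
    CircleMapDegree v d := by
  obtain ⟨θ, hθc, hθe, hθp⟩ := hu
  have hu1 : ∀ t, ‖u t‖ = 1 := by
    intro t; rw [hθe t, Complex.norm_exp]; simp
  have hu0 : ∀ t, u t ≠ 0 := fun t => by
    intro h; have := hu1 t; rw [h] at this; simp at this
  set q : ℝ → ℂ := fun t => v t / u t with hq
  have hq1 : ∀ t, ‖q t‖ = 1 := by
    intro t; simp [hq, norm_div, hv1, hu1]
  have hq0 : ∀ t, q t ≠ 0 := fun t => by
    intro h; have := hq1 t; rw [h] at this; simp at this
  have hqne : ∀ t, q t ≠ -1 := by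
    intro t h
    apply hne t
    have := div_eq_iff (hu0 t) |>.mp h
    rw [this]; ring
  have hslit : ∀ t, q t ∈ Complex.slitPlane := by
    intro t
    by_contra hc
    rw [Complex.mem_slitPlane_iff] at hc
    push_neg at hc
    obtain ⟨hre, him⟩ := hc
    have hqt : q t = ((q t).re : ℂ) := by
      apply Complex.ext <;> simp [him]
    have habs := hq1 t
    rw [hqt, Complex.norm_real, Real.norm_eq_abs] at habs
    have : (q t).re = -1 := by
      rcases abs_eq (by norm_num : (0:ℝ) ≤ 1) |>.mp habs with h | h
      · linarith
      · exact h
    exact hqne t (by rw [hqt, this]; norm_num)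
  have hqc : Continuous q := by
    apply hv.div
    · exact Complex.continuous_exp.comp (by continuity) |>.congr fun t => (hθe t).symm
    · exact hu0
  have hlogc : Continuous fun t => Complex.log (q t) := hqc.clog hslit
  refine ⟨fun t => θ t + (Complex.log (q t)).im, hθc.add (Complex.continuous_im.comp hlogc), ?_, ?_⟩
  · intro t
    have hre : (Complex.log (q t)).re = 0 := by
      rw [Complex.log_re, hq1, Real.log_one]
    have hlq : ((((Complex.log (q t)).im : ℝ)) : ℂ) * Complex.I = Complex.log (q t) := by
      apply Complex.ext <;> simp [hre]
    have : Complex.exp ((((θ t + (Complex.log (q t)).im : ℝ)) : ℂ) * Complex.I)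
        = u t * q t := by
      rw [Complex.ofReal_add, add_mul, Complex.exp_add, hlq, Complex.exp_log (hq0 t), hθe t]
    rw [this, hq, mul_div_cancel₀ _ (hu0 t)]
  · intro t
    have hqper : ∀ t, q (t + 1) = q t := huvper
    simp only [hqper t, hθp t]; ring

lemma degree_homotopy {H : ℝ → ℝ → ℂ} {d : ℤ}
    (hH : Continuous fun p : ℝ × ℝ => H p.1 p.2)
    (h1 : ∀ s t, ‖H s t‖ = 1)
    (hper : ∀ s, Function.Periodic (H s) 1)
    (h0 : CircleMapDegree (H 0) d) : CircleMapDegree (H 1) d := by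
  have hK : IsCompact (Set.Icc (0:ℝ) 1 ×ˢ Set.Icc (0:ℝ) 1) := isCompact_Icc.prod isCompact_Icc
  have hUC := hK.uniformContinuousOn_of_continuous hH.continuousOn
  rw [Metric.uniformContinuousOn_iff] at hUC
  obtain ⟨δ, hδ, hδ2⟩ := hUC 2 (by norm_num)
  obtain ⟨N, hN⟩ := exists_nat_gt (1/δ)
  have hN0 : 0 < (N:ℝ) := lt_trans (by positivity) hN
  have step : ∀ s s', s ∈ Set.Icc (0:ℝ) 1 → s' ∈ Set.Icc (0:ℝ) 1 → |s' - s| < δ →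
      CircleMapDegree (H s) d → CircleMapDegree (H s') d := by
    intro s s' hs hs' hss hdeg
    apply degree_transfer hdeg
    · exact hH.comp (continuous_const.prodMk continuous_id)
    · exact h1 s'
    · intro t hcontra
      have hfr : ∀ σ, H σ (Int.fract t) = H σ t := by
        intro σ
        have h := (hper σ).sub_int_mul_eq (x := t) (n := ⌊t⌋)
        rw [mul_one] at h
        exact h
      have ht' : Int.fract t ∈ Set.Icc (0:ℝ) 1 :=
        ⟨Int.fract_nonneg t, le_of_lt (Int.fract_lt_one t)⟩
      have hmem1 : ((s', Int.fract t) : ℝ × ℝ) ∈ Set.Icc (0:ℝ) 1 ×ˢ Set.Icc (0:ℝ) 1 :=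
        ⟨hs', ht'⟩
      have hmem2 : ((s, Int.fract t) : ℝ × ℝ) ∈ Set.Icc (0:ℝ) 1 ×ˢ Set.Icc (0:ℝ) 1 :=
        ⟨hs, ht'⟩
      have hdist : dist ((s', Int.fract t) : ℝ × ℝ) (s, Int.fract t) < δ := by
        rw [Prod.dist_eq]
        simp [Real.dist_eq, hss, le_of_lt hδ]
      have h2 := hδ2 _ hmem1 _ hmem2 hdist
      simp only at h2
      rw [hfr s', hfr s, hcontra, Complex.dist_eq] at h2
      have : ‖-H s t - H s t‖ = 2 := by
        have : -H s t - H s t = -(2 : ℂ) * H s t := by ring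
        rw [this, norm_mul, h1]
        simp
      rw [this] at h2
      linarith
    · intro t
      rw [hper s' t, hper s t]
  have key : ∀ i : ℕ, i ≤ N → CircleMapDegree (H ((i : ℝ)/N)) d := by
    intro i
    induction i with
    | zero => intro _; simpa using h0
    | succ k ih =>
      intro hk
      have hk' : k ≤ N := Nat.le_of_succ_le hk
      have hkN : (k : ℝ) ≤ N := by exact_mod_cast hk'
      have hkN1 : ((k:ℝ) + 1) ≤ N := by exact_mod_cast hk
      refine step ((k:ℝ)/N) _ ⟨by positivity, by rw [div_le_one hN0]; exact hkN⟩
        ⟨by positivity, ?_⟩ ?_ (ih hk')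
      · push_cast
        rw [div_le_one hN0]; exact hkN1
      · push_cast
        have h1N : 1/(N:ℝ) < δ := by
          rw [div_lt_iff₀ hδ] at hN
          rw [div_lt_iff₀ hN0]
          nlinarith
        have : ((k:ℝ) + 1)/N - (k:ℝ)/N = 1/N := by field_simp; ring
        rw [this, abs_of_pos (by positivity)]
        exact h1N
  have := key N le_rfl
  rwa [div_self (ne_of_gt hN0)] at this

lemma keylt : ∀ s a : ℝ, 0 ≤ s → s ≤ 1 → a < 1 → s * a < 1 := by
  intro s a h0 h1 ha
  rcases h0.lt_or_eq with hpos | hzero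
  · nlinarith [mul_pos hpos (sub_pos.mpr ha)]
  · rw [← hzero]; norm_num

theorem statement4 (f : ℂ → ℂ) (hf : ContinuousOn f SqBdry)
    (γ : ℝ → ℂ) (hloop : IsLoop γ) (hrange : Set.range γ = SqBdry)
    (hinj : Set.InjOn γ (Set.Ico (0:ℝ) 1))
    (hpos : WindingNumber γ 0 1)
    (htop : ∀ z ∈ SqBdry, z.im = 1 → (f z).im < 1)
    (hbot : ∀ z ∈ SqBdry, z.im = -1 → -1 < (f z).im)
    (hright : ∀ z ∈ SqBdry, z.re = 1 → (f z).re < 1)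
    (hleft : ∀ z ∈ SqBdry, z.re = -1 → -1 < (f z).re) :
    LefschetzIndex f γ 1 := by
  obtain ⟨hγc, hγper⟩ := hloop
  have hmem : ∀ t, γ t ∈ SqBdry := fun t => hrange ▸ Set.mem_range_self t
  have hFc : Continuous fun t => f (γ t) := hf.comp_continuous hγc hmem
  -- nonvanishing of s * f z - z on the boundary
  have hnv : ∀ s : ℝ, 0 ≤ s → s ≤ 1 → ∀ t : ℝ, (s:ℂ) * f (γ t) - γ t ≠ 0 := by
    intro s hs0 hs1 t h0
    set z := γ t with hz'
    have hz : z ∈ SqBdry := hmem t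
    rw [Complex.ext_iff] at h0
    simp only [Complex.sub_re, Complex.sub_im, Complex.mul_re, Complex.mul_im,
      Complex.ofReal_re, Complex.ofReal_im, Complex.zero_re, Complex.zero_im,
      zero_mul, sub_zero, zero_add, add_zero] at h0
    obtain ⟨h0re, h0im⟩ := h0
    have hb : max |z.re| |z.im| = 1 := hz
    rcases max_cases |z.re| |z.im| with ⟨hm, _⟩ | ⟨hm, _⟩ <;> rw [hm] at hb
    · rcases (abs_eq (by norm_num : (0:ℝ) ≤ 1)).mp hb with h | h
      · have := hright z hz h
        have := keylt s _ hs0 hs1 this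
        rw [h] at h0re; linarith
      · have := hleft z hz h
        have : s * (-(f z).re) < 1 := keylt s _ hs0 hs1 (by linarith)
        rw [h] at h0re; nlinarith
    · rcases (abs_eq (by norm_num : (0:ℝ) ≤ 1)).mp hb with h | h
      · have := htop z hz h
        have := keylt s _ hs0 hs1 this
        rw [h] at h0im; linarith
      · have := hbot z hz h
        have : s * (-(f z).im) < 1 := keylt s _ hs0 hs1 (by linarith)
        rw [h] at h0im; nlinarith
  -- the homotopy
  set c : ℝ → ℝ := fun s => min (max s 0) 1 with hc'
  have hc0 : ∀ s, 0 ≤ c s := fun s => le_min (le_max_right s 0) zero_le_one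
  have hc1 : ∀ s, c s ≤ 1 := fun s => min_le_right _ _
  set v : ℝ → ℝ → ℂ := fun s t => ((c s : ℝ) : ℂ) * f (γ t) - γ t with hv'
  have hv0 : ∀ s t, v s t ≠ 0 := fun s t => hnv (c s) (hc0 s) (hc1 s) t
  set H : ℝ → ℝ → ℂ := fun s t => v s t / ((‖v s t‖ : ℝ) : ℂ) with hH'
  have hvc : Continuous fun p : ℝ × ℝ => v p.1 p.2 := by
    apply Continuous.sub
    · exact (Complex.continuous_ofReal.comp
        (((continuous_id.max continuous_const).min continuous_const).comp continuous_fst)).mul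
        (hFc.comp continuous_snd)
    · exact hγc.comp continuous_snd
  have hHc : Continuous fun p : ℝ × ℝ => H p.1 p.2 := by
    apply hvc.div (Complex.continuous_ofReal.comp (continuous_norm.comp hvc))
    intro p
    exact Complex.ofReal_ne_zero.mpr (norm_ne_zero_iff.mpr (hv0 p.1 p.2))
  have h1 : ∀ s t, ‖H s t‖ = 1 := by
    intro s t
    rw [hH']
    simp only [norm_div, Complex.norm_real, Real.norm_eq_abs]
    rw [abs_of_nonneg (norm_nonneg _)]
    exact div_self (norm_ne_zero_iff.mpr (hv0 s t))
  have hper : ∀ s, Function.Periodic (H s) 1 := by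
    intro s t
    show v s (t + 1) / _ = v s t / _
    have : v s (t + 1) = v s t := by
      show ((c s : ℝ) : ℂ) * f (γ (t+1)) - γ (t+1) = ((c s : ℝ) : ℂ) * f (γ t) - γ t
      rw [hγper t]
    rw [this]
  have h0deg : CircleMapDegree (H 0) 1 := by
    obtain ⟨g, hgc, hgE, hgp⟩ := hpos
    have hγe : ∀ t, γ t = Complex.exp (g t) := fun t => by rw [← hgE t, zero_add]
    have hc00 : c 0 = 0 := by rw [hc']; norm_num
    refine ⟨fun t => (g t).im + Real.pi,
      (Complex.continuous_im.comp hgc).add continuous_const, ?_, ?_⟩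
    · intro t
      have hv0t : v 0 t = -γ t := by
        show ((c 0 : ℝ) : ℂ) * f (γ t) - γ t = -γ t
        rw [hc00]; simp
      have habs : ‖-γ t‖ = Real.exp ((g t).re) := by
        rw [norm_neg, hγe t, Complex.norm_exp]
      show v 0 t / ((‖v 0 t‖ : ℝ) : ℂ) = _
      rw [hv0t, habs, hγe t]
      rw [show ((Real.exp ((g t).re) : ℝ) : ℂ) = Complex.exp (((g t).re : ℂ)) from
        (Complex.ofReal_exp _)]
      rw [Complex.ofReal_add, add_mul, Complex.exp_add, Complex.exp_pi_mul_I,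
        neg_div, ← Complex.exp_sub]
      have hgt : g t - ((g t).re : ℂ) = (((g t).im : ℝ) : ℂ) * Complex.I := by
        apply Complex.ext <;> simp
      rw [hgt]; ring
    · intro t
      have := hgp t
      have him : (g (t + 1)).im = (g t).im + 2 * Real.pi := by
        rw [this]; simp
      show (g (t+1)).im + Real.pi = (g t).im + Real.pi + _
      rw [him]; push_cast; ring
  have hfin := degree_homotopy hHc h1 hper h0deg
  have hc11 : c 1 = 1 := by rw [hc']; norm_num
  have : H 1 = fun t => (f (γ t) - γ t) / ((‖f (γ t) - γ t‖ : ℝ) : ℂ) := by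
    funext t
    have hv1t : v 1 t = f (γ t) - γ t := by
      show ((c 1 : ℝ) : ℂ) * f (γ t) - γ t = _
      rw [hc11]; simp
    show v 1 t / ((‖v 1 t‖ : ℝ) : ℂ) = _
    rw [hv1t]
  rw [LefschetzIndex, ← this]
  exact hfin
end
end

section
/- Let K be a closed subset of the open annulus A = S² \ {N,S}. Then K is inessential in A (i.e., does not separate N from S) if and only if there exists an arc in S² joining N and S that is disjoint from K. -/
open Set unitInterval
open scoped RealInnerProductSpace

/-- The 2-sphere. -/
abbrev Sphere2 := Metric.sphere (0 : EuclideanSpace ℝ (Fin 3)) 1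


/-- Concatenation of injective paths meeting only at the joint point is injective. -/
theorem path_trans_injective {X : Type*} [TopologicalSpace X] {a b c : X}
    (p₁ : Path a b) (p₂ : Path b c)
    (h₁ : Function.Injective p₁) (h₂ : Function.Injective p₂)
    (h : ∀ u v, p₁ u = p₂ v → p₁ u = b) : Function.Injective (p₁.trans p₂) := by
  intro t t' he
  rw [Path.trans_apply, Path.trans_apply] at he
  split_ifs at he with ht ht' ht'
  · have := h₁ he
    have : (2 : ℝ) * t = 2 * t' := congrArg Subtype.val this
    exact Subtype.ext (by linarith)
  · have hb := h _ _ he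
    have e2 : (2 : ℝ) * t' - 1 = 0 := by
      have := congrArg Subtype.val (h₂ ((he.symm.trans hb).trans p₂.source.symm))
      simpa using this
    exact absurd (by linarith : (t' : ℝ) ≤ 1 / 2) ht'
  · have hb := h _ _ he.symm
    have e2 : (2 : ℝ) * t - 1 = 0 := by
      have := congrArg Subtype.val (h₂ ((he.trans hb).trans p₂.source.symm))
      simpa using this
    exact absurd (by linarith : (t : ℝ) ≤ 1 / 2) ht
  · have := h₂ he
    have : (2 : ℝ) * t - 1 = 2 * t' - 1 := congrArg Subtype.val this
    exact Subtype.ext (by linarith)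

/-- From an injective path and an interior starting time, get an injective path from
that point to the endpoint, with range inside the original range. -/
theorem path_from_mid {X : Type*} [TopologicalSpace X] {a b : X} (q : Path a b)
    (hq : Function.Injective q) (u₀ : I) (hu : (u₀ : ℝ) < 1) :
    ∃ p : Path (q u₀) b, Function.Injective p ∧ Set.range p ⊆ Set.range q := by
  have hmem : ∀ t : I, (u₀ : ℝ) + t * (1 - u₀) ∈ I := by
    intro t
    constructor
    · have := t.2.1
      have := u₀.2.1
      nlinarith [t.2.1, u₀.2.1, sub_nonneg.mpr hu.le]
    · nlinarith [t.2.2, u₀.2.2, t.2.1, sub_nonneg.mpr hu.le]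
  refine ⟨{ toFun := fun t => q ⟨(u₀ : ℝ) + t * (1 - u₀), hmem t⟩
            continuous_toFun := q.continuous.comp (Continuous.subtype_mk (by continuity) _)
            source' := by simp
            target' := by
              have h1 : (⟨(u₀ : ℝ) + (1 : I) * (1 - u₀), hmem 1⟩ : I) = 1 :=
                Subtype.ext (by push_cast; ring)
              show q _ = b
              rw [h1]
              exact q.target },
        ?_, ?_⟩
  · intro t t' he
    have := hq he
    have h2 : (u₀ : ℝ) + t * (1 - u₀) = (u₀ : ℝ) + t' * (1 - u₀) := congrArg Subtype.val this
    have h3 : (t : ℝ) = t' := by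
      have hne : (1 : ℝ) - u₀ ≠ 0 := by linarith
      field_simp at h2
      exact mul_right_cancel₀ hne (by linarith)
    exact Subtype.ext h3
  · rintro x ⟨t, rfl⟩
    exact ⟨_, rfl⟩



/-- `PolyJoined V x y`: `x` and `y` are joined by a polygonal path inside `V`. -/
inductive PolyJoined {F : Type*} [AddCommGroup F] [Module ℝ F] (V : Set F) : F → F → Prop
  | refl (x : F) : PolyJoined V x x
  | cons {x y z : F} (hseg : segment ℝ x y ⊆ V) (h : PolyJoined V y z) : PolyJoined V x z

theorem PolyJoined.snoc {F : Type*} [AddCommGroup F] [Module ℝ F] {V : Set F} {x y z : F}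
    (h : PolyJoined V x y) (hseg : segment ℝ y z ⊆ V) : PolyJoined V x z := by
  induction h with
  | refl w => exact PolyJoined.cons hseg (PolyJoined.refl z)
  | cons hs h ih => exact PolyJoined.cons hs (ih hseg)

theorem polyJoined_of_mem_connectedComponentIn {F : Type*} [NormedAddCommGroup F]
    [NormedSpace ℝ F] {V : Set F} (hV : IsOpen V) {n s : F}
    (hs : s ∈ connectedComponentIn V n) : PolyJoined V n s := by
  have hnV : n ∈ V := connectedComponentIn_nonempty_iff.mp ⟨s, hs⟩
  set W : Set F := {x | x ∈ V ∧ PolyJoined V n x} with hW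
  set W' : Set F := {x | x ∈ V ∧ ¬ PolyJoined V n x} with hW'
  have hWo : IsOpen W := by
    rw [Metric.isOpen_iff]
    rintro x ⟨hxV, hxP⟩
    obtain ⟨ε, hε, hball⟩ := Metric.isOpen_iff.mp hV x hxV
    refine ⟨ε, hε, fun y hy => ⟨hball hy, hxP.snoc ?_⟩⟩
    exact fun z hz =>
      hball ((convex_ball x ε).segment_subset (Metric.mem_ball_self hε) hy hz)
  have hW'o : IsOpen W' := by
    rw [Metric.isOpen_iff]
    rintro x ⟨hxV, hxP⟩
    obtain ⟨ε, hε, hball⟩ := Metric.isOpen_iff.mp hV x hxV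
    refine ⟨ε, hε, fun y hy => ⟨hball hy, fun hyP => hxP (hyP.snoc ?_)⟩⟩
    exact fun z hz =>
      hball ((convex_ball x ε).segment_subset hy (Metric.mem_ball_self hε) hz)
  have hsub : connectedComponentIn V n ⊆ W := by
    apply IsPreconnected.subset_left_of_subset_union hWo hW'o
    · exact Set.disjoint_left.mpr fun x hx hx' => hx'.2 hx.2
    · intro x hx
      by_cases hP : PolyJoined V n x
      · exact Or.inl ⟨connectedComponentIn_subset V n hx, hP⟩
      · exact Or.inr ⟨connectedComponentIn_subset V n hx, hP⟩
    · exact ⟨n, mem_connectedComponentIn hnV, hnV, PolyJoined.refl n⟩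
    · exact isPreconnected_connectedComponentIn
  exact (hsub hs).2

variable {F : Type*} [NormedAddCommGroup F] [NormedSpace ℝ F]

theorem splice_path {V : Set F} {n y s : F}
    (hns : n ≠ s) (hseg : segment ℝ n y ⊆ V) {q : Path y s} (hq : Function.Injective q)
    (hqV : ∀ t, q t ∈ V) : ∃ p : Path n s, Function.Injective p ∧ ∀ t, p t ∈ V := by
  by_cases hn : n ∈ Set.range ⇑q
  · obtain ⟨u₀, hu₀⟩ := hn
    have hu1 : (u₀ : ℝ) < 1 := by
      rcases lt_or_eq_of_le u₀.2.2 with h | h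
      · exact h
      · exact absurd (hu₀.symm.trans (by rw [show u₀ = 1 from Subtype.ext h, q.target]))
          (fun hh => hns hh)
    obtain ⟨p, hpinj, hpr⟩ := path_from_mid q hq u₀ hu1
    refine ⟨p.cast hu₀.symm rfl, ?_, ?_⟩
    · rw [Path.cast_coe]; exact hpinj
    · intro t
      rw [Path.cast_coe]
      obtain ⟨u, hu⟩ := hpr ⟨t, rfl⟩
      exact hu ▸ hqV u
  · set L : ℝ →ᵃ[ℝ] F := AffineMap.lineMap n y with hL
    set T : Set ℝ := Set.Icc (0 : ℝ) 1 ∩ (⇑L) ⁻¹' (Set.range ⇑q) with hT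
    have hLy : L 1 = y := by rw [hL, AffineMap.lineMap_apply_one]
    have hT1 : (1 : ℝ) ∈ T :=
      ⟨⟨zero_le_one, le_refl 1⟩, by rw [Set.mem_preimage, hLy]; exact ⟨0, q.source⟩⟩
    have hrc : IsClosed (Set.range ⇑q) := (isCompact_range q.continuous).isClosed
    have hTc : IsClosed T := isClosed_Icc.inter (hrc.preimage AffineMap.lineMap_continuous)
    have hTb : BddBelow T := ⟨0, fun t ht => ht.1.1⟩
    set t₀ : ℝ := sInf T with ht₀
    have ht₀T : t₀ ∈ T := hTc.csInf_mem ⟨1, hT1⟩ hTb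
    have ht₀min : ∀ t ∈ T, t₀ ≤ t := fun t ht => csInf_le hTb ht
    have ht₀1 : t₀ ≤ 1 := ht₀min 1 hT1
    obtain ⟨u₀, hu₀⟩ := ht₀T.2
    have hnx : n ≠ L t₀ := fun h => hn (h ▸ ⟨u₀, hu₀⟩)
    have hny : n ≠ y := fun h => hn ⟨0, q.source.trans h.symm⟩
    have ht₀pos : 0 < t₀ := by
      rcases lt_or_eq_of_le ht₀T.1.1 with h | h
      · exact h
      · exact absurd (by rw [hL, ← h, AffineMap.lineMap_apply_zero]) hnx
    have hmem : ∀ t : I, (t : ℝ) * t₀ ∈ Set.Icc (0 : ℝ) 1 :=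
      fun t => ⟨mul_nonneg t.2.1 ht₀T.1.1, mul_le_one₀ t.2.2 ht₀T.1.1 ht₀1⟩
    have hcont : Continuous fun t : I => L ((t : ℝ) * t₀) :=
      AffineMap.lineMap_continuous.comp (continuous_subtype_val.mul continuous_const)
    set p₁ : Path n (L t₀) :=
      { toFun := fun t => L ((t : ℝ) * t₀)
        continuous_toFun := hcont
        source' := by
          show L (((0 : I) : ℝ) * t₀) = n
          rw [Set.Icc.coe_zero, zero_mul, hL, AffineMap.lineMap_apply_zero]
        target' := by
          show L (((1 : I) : ℝ) * t₀) = L t₀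
          rw [Set.Icc.coe_one, one_mul] } with hp₁
    have hp₁c : ∀ t : I, p₁ t = L ((t : ℝ) * t₀) := fun t => rfl
    have hp₁inj : Function.Injective p₁ := by
      intro t t' he
      rw [hp₁c, hp₁c] at he
      have := AffineMap.lineMap_injective ℝ hny he
      exact Subtype.ext (mul_right_cancel₀ ht₀pos.ne' this)
    have hp₁V : ∀ t, p₁ t ∈ V := by
      intro t
      rw [segment_eq_image_lineMap] at hseg
      exact hseg ⟨(t : ℝ) * t₀, hmem t, rfl⟩
    have hkey : ∀ t : I, p₁ t ∈ Set.range ⇑q → p₁ t = L t₀ := by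
      intro t ht
      have hmemT : (t : ℝ) * t₀ ∈ T := ⟨hmem t, ht⟩
      have h1 := ht₀min _ hmemT
      have h2 : (t : ℝ) * t₀ ≤ t₀ := by nlinarith [t.2.2, ht₀pos]
      rw [hp₁c]
      exact congrArg L (le_antisymm h2 h1)
    by_cases hx₀s : L t₀ = s
    · refine ⟨p₁.cast rfl hx₀s.symm, ?_, ?_⟩
      · rw [Path.cast_coe]; exact hp₁inj
      · intro t; rw [Path.cast_coe]; exact hp₁V t
    · have hu1 : (u₀ : ℝ) < 1 := by
        rcases lt_or_eq_of_le u₀.2.2 with h | h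
        · exact h
        · have hs' : s = L t₀ := by
            rw [← q.target, show (1 : I) = u₀ from Subtype.ext h.symm, hu₀]
          exact absurd hs'.symm hx₀s
      obtain ⟨p₂, hp₂inj, hp₂r⟩ := path_from_mid q hq u₀ hu1
      set p₂' : Path (L t₀) s := p₂.cast (hu₀ ▸ rfl) rfl with hp₂'
      have hp₂'r : Set.range ⇑p₂' ⊆ Set.range ⇑q := by rw [hp₂', Path.cast_coe]; exact hp₂r
      have hp₂'inj : Function.Injective p₂' := by rw [hp₂', Path.cast_coe]; exact hp₂inj
      refine ⟨p₁.trans p₂', ?_, ?_⟩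
      · refine path_trans_injective p₁ p₂' hp₁inj hp₂'inj ?_
        intro u v huv
        exact hkey u (huv ▸ hp₂'r ⟨v, rfl⟩)
      · intro t
        have : (p₁.trans p₂') t ∈ Set.range ⇑(p₁.trans p₂') := ⟨t, rfl⟩
        rw [Path.trans_range] at this
        rcases this with ⟨u, hu⟩ | hmem2
        · exact hu ▸ hp₁V u
        · obtain ⟨u, hu⟩ := hp₂'r hmem2
          exact hu ▸ hqV u

theorem PolyJoined.exists_injective_path {V : Set F} {n s : F}
    (h : PolyJoined V n s) :
    n ≠ s → ∃ p : Path n s, Function.Injective p ∧ ∀ t, p t ∈ V := by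
  induction h with
  | refl x => exact fun hns => absurd rfl hns
  | @cons x y z hseg h ih =>
    intro hns
    by_cases hyz : y = z
    · subst hyz
      refine ⟨{ toFun := fun t => AffineMap.lineMap x y ((t : I) : ℝ)
                continuous_toFun :=
                  AffineMap.lineMap_continuous.comp continuous_subtype_val
                source' := show AffineMap.lineMap x y ((0 : I) : ℝ) = x by
                  rw [Set.Icc.coe_zero, AffineMap.lineMap_apply_zero]
                target' := show AffineMap.lineMap x y ((1 : I) : ℝ) = y by
                  rw [Set.Icc.coe_one, AffineMap.lineMap_apply_one] },
            ?_, ?_⟩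
      · intro t t' he
        exact Subtype.ext (AffineMap.lineMap_injective ℝ hns he)
      · intro t
        rw [segment_eq_image_lineMap] at hseg
        exact hseg ⟨(t : ℝ), t.2, rfl⟩
    · obtain ⟨q, hq, hqV⟩ := ih hyz
      exact splice_path hns hseg hq hqV


theorem exists_third_point (N S : Sphere2) : ∃ q : Sphere2, q ≠ N ∧ q ≠ S := by
  set E := EuclideanSpace ℝ (Fin 3) with hE
  set u : E := (N : E) with hu
  set v : E := (S : E) with hv
  have hW : (Submodule.span ℝ ({u, v} : Set E))ᗮ ≠ ⊥ := by
    intro h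
    have htop : Submodule.span ℝ ({u, v} : Set E) = ⊤ :=
      Submodule.orthogonal_eq_bot_iff.mp h
    have hcard : Module.finrank ℝ (Submodule.span ℝ ({u, v} : Set E)) ≤ 2 := by
      classical
      refine (finrank_span_le_card ({u, v} : Set E)).trans ?_
      refine (Finset.card_le_card ?_).trans (?_ : ({u, v} : Finset E).card ≤ 2)
      · intro x hx
        simp only [Set.mem_toFinset] at hx
        simpa using hx
      · exact (Finset.card_insert_le _ _).trans (by simp)
    rw [htop] at hcard
    have h3 : Module.finrank ℝ E = 3 := finrank_euclideanSpace_fin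
    rw [finrank_top, h3] at hcard
    omega
  obtain ⟨w, hwW, hw0⟩ := Submodule.exists_mem_ne_zero_of_ne_bot hW
  have hnorm : ‖‖w‖⁻¹ • w‖ = 1 := by
    rw [norm_smul, norm_inv, norm_norm, inv_mul_cancel₀ (norm_ne_zero_iff.mpr hw0)]
  refine ⟨⟨‖w‖⁻¹ • w, mem_sphere_zero_iff_norm.mpr hnorm⟩, ?_, ?_⟩
  · intro h
    have hc : ‖w‖⁻¹ • w = u := congrArg Subtype.val h
    have h0 : ⟪u, w⟫ = 0 :=
      (Submodule.mem_orthogonal _ w).mp hwW u (Submodule.subset_span (by simp))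
    have h1 : ⟪u, u⟫ = 0 := by
      nth_rewrite 2 [← hc]
      rw [real_inner_smul_right, h0, mul_zero]
    rw [real_inner_self_eq_norm_mul_norm, norm_eq_of_mem_sphere N] at h1
    norm_num at h1
  · intro h
    have hc : ‖w‖⁻¹ • w = v := congrArg Subtype.val h
    have h0 : ⟪v, w⟫ = 0 :=
      (Submodule.mem_orthogonal _ w).mp hwW v (Submodule.subset_span (by simp))
    have h1 : ⟪v, v⟫ = 0 := by
      nth_rewrite 2 [← hc]
      rw [real_inner_smul_right, h0, mul_zero]
    rw [real_inner_self_eq_norm_mul_norm, norm_eq_of_mem_sphere S] at h1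
    norm_num at h1

/-- Key geometric step: if `W` is an open subset of the sphere missing the point `q`,
containing `N` and `S` which lie in the same connected component of `W` (or `W` is the
full complement of `q`), then there is an injective path from `N` to `S` inside `W`. -/
theorem exists_injective_path_in_sphere {q N S : Sphere2} {W : Set Sphere2}
    (hWo : IsOpen W) (hWq : q ∉ W) (hNW : N ∈ W) (hSW : S ∈ W) (hNS : N ≠ S)
    (hS : S ∈ connectedComponentIn W N ∨ W = {q}ᶜ) :
    ∃ p : Path N S, Function.Injective p ∧ ∀ t, p t ∈ W := by
  set φ := stereographic (norm_eq_of_mem_sphere q) with hφ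
  have hqeta : (⟨(q : EuclideanSpace ℝ (Fin 3)), by simp⟩ : Sphere2) = q := Subtype.ext rfl
  have hsrc : W ⊆ φ.source := by
    intro x hx
    rw [hφ, stereographic_source, Set.mem_compl_iff, Set.mem_singleton_iff, hqeta]
    rintro rfl
    exact hWq hx
  have hns : φ N ≠ φ S := fun h => hNS (φ.injOn (hsrc hNW) (hsrc hSW) h)
  obtain ⟨p', hp'inj, hp'V⟩ :
      ∃ p' : Path (φ N) (φ S), Function.Injective p' ∧ ∀ t, p' t ∈ φ '' W := by
    rcases hS with hS | hS
    · have hVo : IsOpen (φ '' W) := φ.isOpen_image_of_subset_source hWo hsrc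
      have hCpre : IsPreconnected (φ '' (connectedComponentIn W N)) :=
        isPreconnected_connectedComponentIn.image _
          (φ.continuousOn.mono ((connectedComponentIn_subset W N).trans hsrc))
      have hsub : φ '' (connectedComponentIn W N) ⊆ φ '' W :=
        Set.image_mono (connectedComponentIn_subset W N)
      have hmemn : φ N ∈ φ '' (connectedComponentIn W N) :=
        ⟨N, mem_connectedComponentIn hNW, rfl⟩
      have hs' : φ S ∈ connectedComponentIn (φ '' W) (φ N) :=
        hCpre.subset_connectedComponentIn hmemn hsub ⟨S, hS, rfl⟩
      exact (polyJoined_of_mem_connectedComponentIn hVo hs').exists_injective_path hns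
    · have hWsrc : W = φ.source := by
        rw [hφ, stereographic_source, hS, hqeta]
      have himg : φ '' W = Set.univ := by
        rw [hWsrc, φ.image_source_eq_target, hφ, stereographic_target]
      have hpj : PolyJoined (φ '' W) (φ N) (φ S) := by
        rw [himg]
        exact PolyJoined.cons (Set.subset_univ _) (PolyJoined.refl _)
      exact hpj.exists_injective_path hns
  have hcs : Continuous φ.symm := by
    have h1 := φ.continuousOn_symm
    rw [hφ, stereographic_target] at h1
    exact continuousOn_univ.mp h1
  have hsinj : Function.Injective φ.symm := by
    have h1 := φ.symm.injOn
    rw [OpenPartialHomeomorph.symm_source, hφ, stereographic_target] at h1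
    exact injOn_univ.mp h1
  refine ⟨{ toFun := fun t => φ.symm (p' t)
            continuous_toFun := hcs.comp p'.continuous
            source' := by
              show φ.symm (p' 0) = N
              rw [p'.source]
              exact φ.left_inv (hsrc hNW)
            target' := by
              show φ.symm (p' 1) = S
              rw [p'.target]
              exact φ.left_inv (hsrc hSW) }, ?_, ?_⟩
  · intro t t' he
    exact hp'inj (hsinj he)
  · intro t
    obtain ⟨x, hxW, hx⟩ := hp'V t
    show φ.symm (p' t) ∈ W
    rw [← hx, φ.left_inv (hsrc hxW)]
    exact hxW


/-- Let `K` be a closed subset of the open annulus `A = S² \ {N,S}`.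
Then `K` is inessential in `A` (does not separate `N` from `S`, i.e. `N` and `S` lie in
the same connected component of `S² \ K`) if and only if there exists an arc (injective
path) in `S²` joining `N` and `S` disjoint from `K`. -/
theorem statement19 (N S : Sphere2) (hNS : N ≠ S) (K : Set Sphere2)
    (hKclosed : IsClosed K) (hKA : K ⊆ {N, S}ᶜ) :
    connectedComponentIn Kᶜ N = connectedComponentIn Kᶜ S ↔
      ∃ p : Path N S, Function.Injective p ∧ ∀ t, p t ∉ K := by
  have hNK : N ∉ K := fun h => hKA h (Set.mem_insert _ _)
  have hSK : S ∉ K := fun h => hKA h (Set.mem_insert_of_mem _ rfl)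
  constructor
  · intro heq
    rcases K.eq_empty_or_nonempty with hK | ⟨k, hkK⟩
    · obtain ⟨q, hqN, hqS⟩ := exists_third_point N S
      obtain ⟨p, hpinj, hpW⟩ :=
        exists_injective_path_in_sphere (q := q) (W := {q}ᶜ)
          isClosed_singleton.isOpen_compl (by simp)
          (Set.mem_compl_singleton_iff.mpr hqN.symm)
          (Set.mem_compl_singleton_iff.mpr hqS.symm) hNS (Or.inr rfl)
      exact ⟨p, hpinj, fun t => by simp [hK]⟩
    · have hSc : S ∈ connectedComponentIn Kᶜ N := by
        rw [heq]
        exact mem_connectedComponentIn hSK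
      obtain ⟨p, hpinj, hpW⟩ :=
        exists_injective_path_in_sphere (q := k) (W := Kᶜ)
          hKclosed.isOpen_compl (by simp [hkK]) hNK hSK hNS (Or.inl hSc)
      exact ⟨p, hpinj, hpW⟩
  · rintro ⟨p, hpinj, hpK⟩
    have hr : IsPreconnected (Set.range p) :=
      (isPreconnected_range p.continuous)
    have hrK : Set.range p ⊆ Kᶜ := by rintro x ⟨t, rfl⟩; exact hpK t
    have hNr : N ∈ Set.range p := ⟨0, p.source⟩
    have hSr : S ∈ Set.range p := ⟨1, p.target⟩
    have hsub := hr.subset_connectedComponentIn hNr hrK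
    exact connectedComponentIn_eq (hsub hSr)
end
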